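/- Let A and B be algebras over ℂ with A unital, and φ : M₂(A) → B an arbitrary function. Then φ is a ℂ-algebra homomorphism if and only if φ is a semigroup homomorphism (φ(xy) = φ(x)φ(y) for all x, y) which is ℝ-linear on ℝ·1 (i.e. φ(λ·1 + μ·1) = λφ(1) + μφ(1) for all λ, μ ∈ ℝ, so in particular φ(λ·1) = λφ(1) for λ ∈ ℝ) and satisfies φ(i·1) = i·φ(e₁₁) + i·φ(e₂₂). -/

import Mathlib

open Matrix

private lemma aux_peirce {A : Type*} [Ring A] (j k : Fin 2) (x : Matrix (Fin 2) (Fin 2) A) :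
    Matrix.single j j (1:A) * x * Matrix.single k k (1:A) = Matrix.single j k (x j k) := by
  ext a b
  fin_cases j <;> fin_cases k <;> fin_cases a <;> fin_cases b <;>
    simp [Matrix.single, Matrix.mul_apply, Fin.sum_univ_two]

private lemma aux_one {A : Type*} [Ring A] :
    Matrix.single 0 0 (1:A) + Matrix.single 1 1 (1:A) = (1 : Matrix (Fin 2) (Fin 2) A) := by
  ext a b
  fin_cases a <;> fin_cases b <;> simp [Matrix.single, Matrix.one_apply]

private lemma aux_mul_ne {A : Type*} [Ring A] {i j k l : Fin 2} (h : j ≠ k) (a b : A) :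
    Matrix.single i j a * Matrix.single k l b = 0 :=
  Matrix.single_mul_single_of_ne _ _ _ _ h _

private lemma aux_fac12 {A : Type*} [Ring A] (s t : A) :
    (Matrix.single 0 0 (1:A) + Matrix.single 0 1 s) *
      (Matrix.single 0 1 t + Matrix.single 1 1 (1:A))
    = Matrix.single (0 : Fin 2) (1 : Fin 2) (s + t) := by
  ext a b
  fin_cases a <;> fin_cases b <;>
    simp [Matrix.single, Matrix.mul_apply, Fin.sum_univ_two, add_comm]

private lemma aux_fac21 {A : Type*} [Ring A] (s t : A) :
    (Matrix.single 1 1 (1:A) + Matrix.single 1 0 s) *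
      (Matrix.single 1 0 t + Matrix.single 0 0 (1:A))
    = Matrix.single (1 : Fin 2) (0 : Fin 2) (s + t) := by
  ext a b
  fin_cases a <;> fin_cases b <;>
    simp [Matrix.single, Matrix.mul_apply, Fin.sum_univ_two, add_comm]

theorem stmt_3 {A B : Type*} [Ring A] [Algebra ℂ A]
    [NonUnitalRing B] [Module ℂ B] [SMulCommClass ℂ B B] [IsScalarTower ℂ B B]
    (φ : Matrix (Fin 2) (Fin 2) A → B) :
    ((∀ x y, φ (x + y) = φ x + φ y) ∧ (∀ x y, φ (x * y) = φ x * φ y) ∧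
        (∀ (c : ℂ) (x), φ (c • x) = c • φ x)) ↔
      ((∀ x y, φ (x * y) = φ x * φ y) ∧
        (∀ lam mu : ℝ,
          φ ((lam : ℂ) • (1 : Matrix (Fin 2) (Fin 2) A) +
              (mu : ℂ) • (1 : Matrix (Fin 2) (Fin 2) A)) =
            (lam : ℂ) • φ 1 + (mu : ℂ) • φ 1) ∧
        φ (Complex.I • (1 : Matrix (Fin 2) (Fin 2) A)) =
          Complex.I • φ (Matrix.single 0 0 (1 : A)) +
          Complex.I • φ (Matrix.single 1 1 (1 : A))) := by
  have hne01 : (0 : Fin 2) ≠ 1 := by decide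
  have hne10 : (1 : Fin 2) ≠ 0 := by decide
  constructor
  · rintro ⟨hadd, hmul, hsmul⟩
    refine ⟨hmul, fun lam mu => by rw [hadd, hsmul, hsmul], ?_⟩
    rw [hsmul, ← aux_one, hadd, smul_add]
  · rintro ⟨hm, hr, hi⟩
    -- basic facts
    have h0 : φ 0 = 0 := by simpa using hr 0 0
    have hlam : ∀ l : ℝ, φ ((l : ℂ) • (1 : Matrix (Fin 2) (Fin 2) A)) = (l : ℂ) • φ 1 := by
      intro l; simpa using hr l 0
    -- φ 1 = φ e00 + φ e11
    have hone : φ 1 = φ (Matrix.single 0 0 (1:A)) + φ (Matrix.single 1 1 (1:A)) := by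
      have hu : (Complex.I • (1 : Matrix (Fin 2) (Fin 2) A)) * (Complex.I • 1)
          = ((-1 : ℝ) : ℂ) • 1 := by
        rw [smul_mul_assoc, mul_smul_comm, smul_smul, one_mul, Complex.I_mul_I]
        norm_num
      have h2 := hm (Complex.I • (1 : Matrix (Fin 2) (Fin 2) A)) (Complex.I • 1)
      rw [hu, hlam (-1), hi] at h2
      have h00 : φ (Matrix.single 0 0 (1:A)) * φ (Matrix.single 0 0 (1:A))
          = φ (Matrix.single 0 0 (1:A)) := by rw [← hm]; simp
      have h11 : φ (Matrix.single 1 1 (1:A)) * φ (Matrix.single 1 1 (1:A))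
          = φ (Matrix.single 1 1 (1:A)) := by rw [← hm]; simp
      have h01 : φ (Matrix.single 0 0 (1:A)) * φ (Matrix.single 1 1 (1:A)) = 0 := by
        rw [← hm, aux_mul_ne hne01, h0]
      have h10 : φ (Matrix.single 1 1 (1:A)) * φ (Matrix.single 0 0 (1:A)) = 0 := by
        rw [← hm, aux_mul_ne hne10, h0]
      rw [add_mul, mul_add, mul_add, smul_mul_assoc, smul_mul_assoc, smul_mul_assoc,
        smul_mul_assoc, mul_smul_comm, mul_smul_comm, mul_smul_comm, mul_smul_comm,
        h00, h01, h10, h11, smul_zero, smul_zero, add_zero, zero_add,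
        smul_smul, smul_smul, Complex.I_mul_I] at h2
      have h2' : (-1 : ℂ) • φ 1 = (-1 : ℂ) •
          (φ (Matrix.single 0 0 (1:A)) + φ (Matrix.single 1 1 (1:A))) := by
        rw [smul_add]; simpa using h2
      have := smul_right_injective B (by norm_num : (-1 : ℂ) ≠ 0) h2'
      simpa using this
    -- left and right splittings
    have hleft : ∀ x, φ x = φ (Matrix.single 0 0 (1:A) * x) + φ (Matrix.single 1 1 (1:A) * x) := by
      intro x
      calc φ x = φ (1 * x) := by rw [one_mul]
        _ = (φ (Matrix.single 0 0 (1:A)) + φ (Matrix.single 1 1 (1:A))) * φ x := by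
            rw [hm, hone]
        _ = _ := by rw [add_mul, ← hm, ← hm]
    have hright : ∀ x, φ x = φ (x * Matrix.single 0 0 (1:A)) + φ (x * Matrix.single 1 1 (1:A)) := by
      intro x
      calc φ x = φ (x * 1) := by rw [mul_one]
        _ = φ x * (φ (Matrix.single 0 0 (1:A)) + φ (Matrix.single 1 1 (1:A))) := by
            rw [hm, hone]
        _ = _ := by rw [mul_add, ← hm, ← hm]
    -- full Peirce decomposition of φ
    have hdecomp : ∀ x : Matrix (Fin 2) (Fin 2) A,
        φ x = φ (Matrix.single 0 0 (x 0 0)) + φ (Matrix.single 0 1 (x 0 1)) +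
          (φ (Matrix.single 1 0 (x 1 0)) + φ (Matrix.single 1 1 (x 1 1))) := by
      intro x
      calc φ x = φ (Matrix.single 0 0 (1:A) * x) + φ (Matrix.single 1 1 (1:A) * x) :=
            hleft x
        _ = _ := by
            rw [hright (Matrix.single 0 0 (1:A) * x), hright (Matrix.single 1 1 (1:A) * x),
              aux_peirce 0 0, aux_peirce 0 1, aux_peirce 1 0, aux_peirce 1 1]
    -- additivity on the (0,1) component
    have hadd01 : ∀ s t : A, φ (Matrix.single 0 1 (s + t))
        = φ (Matrix.single 0 1 s) + φ (Matrix.single 0 1 t) := by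
      intro s t
      have hA : φ (Matrix.single 0 0 (1:A) + Matrix.single 0 1 s)
          = φ (Matrix.single 0 0 (1:A)) + φ (Matrix.single 0 1 s) := by
        have h := hdecomp (Matrix.single 0 0 (1:A) + Matrix.single 0 1 s)
        simp [h0] at h
        rw [h] <;> abel
      have hB : φ (Matrix.single 0 1 t + Matrix.single 1 1 (1:A))
          = φ (Matrix.single 0 1 t) + φ (Matrix.single 1 1 (1:A)) := by
        have h := hdecomp (Matrix.single 0 1 t + Matrix.single 1 1 (1:A))
        simp [h0] at h
        rw [h] <;> abel
      calc φ (Matrix.single 0 1 (s + t))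
          = φ ((Matrix.single 0 0 (1:A) + Matrix.single 0 1 s) *
              (Matrix.single 0 1 t + Matrix.single 1 1 (1:A))) := by rw [aux_fac12]
        _ = (φ (Matrix.single 0 0 (1:A)) + φ (Matrix.single 0 1 s)) *
              (φ (Matrix.single 0 1 t) + φ (Matrix.single 1 1 (1:A))) := by
            rw [hm, hA, hB]
        _ = φ (Matrix.single 0 0 (1:A) * Matrix.single 0 1 t) +
              φ (Matrix.single 0 0 (1:A) * Matrix.single 1 1 (1:A)) +
              (φ (Matrix.single 0 1 s * Matrix.single 0 1 t) +
               φ (Matrix.single 0 1 s * Matrix.single 1 1 (1:A))) := by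
            rw [add_mul, mul_add, mul_add, ← hm, ← hm, ← hm, ← hm]
        _ = φ (Matrix.single 0 1 s) + φ (Matrix.single 0 1 t) := by
            rw [Matrix.single_mul_single_same, Matrix.single_mul_single_same,
              aux_mul_ne hne01, aux_mul_ne hne10, h0, one_mul, mul_one]
            abel
    -- additivity on the (1,0) component
    have hadd10 : ∀ s t : A, φ (Matrix.single 1 0 (s + t))
        = φ (Matrix.single 1 0 s) + φ (Matrix.single 1 0 t) := by
      intro s t
      have hA : φ (Matrix.single 1 1 (1:A) + Matrix.single 1 0 s)
          = φ (Matrix.single 1 1 (1:A)) + φ (Matrix.single 1 0 s) := by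
        have h := hdecomp (Matrix.single 1 1 (1:A) + Matrix.single 1 0 s)
        simp [h0] at h
        rw [h] <;> abel
      have hB : φ (Matrix.single 1 0 t + Matrix.single 0 0 (1:A))
          = φ (Matrix.single 1 0 t) + φ (Matrix.single 0 0 (1:A)) := by
        have h := hdecomp (Matrix.single 1 0 t + Matrix.single 0 0 (1:A))
        simp [h0] at h
        rw [h] <;> abel
      calc φ (Matrix.single 1 0 (s + t))
          = φ ((Matrix.single 1 1 (1:A) + Matrix.single 1 0 s) *
              (Matrix.single 1 0 t + Matrix.single 0 0 (1:A))) := by rw [aux_fac21]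
        _ = (φ (Matrix.single 1 1 (1:A)) + φ (Matrix.single 1 0 s)) *
              (φ (Matrix.single 1 0 t) + φ (Matrix.single 0 0 (1:A))) := by
            rw [hm, hA, hB]
        _ = φ (Matrix.single 1 1 (1:A) * Matrix.single 1 0 t) +
              φ (Matrix.single 1 1 (1:A) * Matrix.single 0 0 (1:A)) +
              (φ (Matrix.single 1 0 s * Matrix.single 1 0 t) +
               φ (Matrix.single 1 0 s * Matrix.single 0 0 (1:A))) := by
            rw [add_mul, mul_add, mul_add, ← hm, ← hm, ← hm, ← hm]
        _ = φ (Matrix.single 1 0 s) + φ (Matrix.single 1 0 t) := by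
            rw [Matrix.single_mul_single_same, Matrix.single_mul_single_same,
              aux_mul_ne hne10, aux_mul_ne hne01, h0, one_mul, mul_one]
            abel
    -- additivity on the diagonal components
    have hadd00 : ∀ s t : A, φ (Matrix.single 0 0 (s + t))
        = φ (Matrix.single 0 0 s) + φ (Matrix.single 0 0 t) := by
      intro s t
      have hfac : Matrix.single (0:Fin 2) (0:Fin 2) (s + t)
          = Matrix.single 0 1 (s + t) * Matrix.single 1 0 (1:A) := by
        rw [Matrix.single_mul_single_same, mul_one]
      rw [hfac, hm, hadd01, add_mul, ← hm, ← hm,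
        Matrix.single_mul_single_same, Matrix.single_mul_single_same, mul_one, mul_one]
    have hadd11 : ∀ s t : A, φ (Matrix.single 1 1 (s + t))
        = φ (Matrix.single 1 1 s) + φ (Matrix.single 1 1 t) := by
      intro s t
      have hfac : Matrix.single (1:Fin 2) (1:Fin 2) (s + t)
          = Matrix.single 1 0 (s + t) * Matrix.single 0 1 (1:A) := by
        rw [Matrix.single_mul_single_same, mul_one]
      rw [hfac, hm, hadd10, add_mul, ← hm, ← hm,
        Matrix.single_mul_single_same, Matrix.single_mul_single_same, mul_one, mul_one]
    -- full additivity
    have hadd : ∀ x y, φ (x + y) = φ x + φ y := by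
      intro x y
      rw [hdecomp (x + y), hdecomp x, hdecomp y]
      simp only [Matrix.add_apply, hadd00, hadd01, hadd10, hadd11]
      abel
    refine ⟨hadd, hm, ?_⟩
    -- real homogeneity
    have hreal : ∀ (l : ℝ) x, φ ((l : ℂ) • x) = (l : ℂ) • φ x := by
      intro l x
      have hx : (l : ℂ) • x = ((l : ℂ) • (1 : Matrix (Fin 2) (Fin 2) A)) * x := by
        rw [smul_mul_assoc, one_mul]
      rw [hx, hm, hlam, smul_mul_assoc, ← hm, one_mul]
    -- I homogeneity
    have hIh : ∀ x, φ (Complex.I • x) = Complex.I • φ x := by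
      intro x
      have hx : Complex.I • x = (Complex.I • (1 : Matrix (Fin 2) (Fin 2) A)) * x := by
        rw [smul_mul_assoc, one_mul]
      rw [hx, hm, hi, add_mul, smul_mul_assoc, smul_mul_assoc, ← hm, ← hm, ← smul_add,
        ← hleft x]
    intro c x
    have hc : c • x = (c.re : ℂ) • x + (c.im : ℂ) • (Complex.I • x) := by
      rw [smul_smul, ← add_smul, Complex.re_add_im]
    rw [hc, hadd, hreal, hreal, hIh, smul_smul, ← add_smul, Complex.re_add_im]
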